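/- Let X ∈ {1, ..., m} have distribution P(X = i) = (1/2)^i for 1 ≤ i < m and P(X = m) = (1/2)^{m-1}, and let 0 ≤ η ≤ 1. Then E[e^{-η X}] ≤ 1 + (1/2)^{m-1} η - 2η + C η² for some absolute constant C, i.e., E[e^{-η X}] = 1 + ((1/2)^{m-1} - 2)η + O(η²) uniformly in m. -/

import Mathlib

open MeasureTheory Finset

private lemma exp_neg_le' (t : ℝ) (ht : 0 ≤ t) : Real.exp (-t) ≤ 1 - t + t ^ 2 := by
  have hpos : (0:ℝ) < Real.exp t := Real.exp_pos t
  have key : 1 ≤ (1 - t + t ^ 2) * Real.exp t := by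
    nlinarith [Real.add_one_le_exp t, sq_nonneg t, sq_nonneg (t-1)]
  rw [Real.exp_neg, inv_eq_one_div, div_le_iff₀ hpos]
  linarith

private lemma sum_geom' (n : ℕ) : ∑ i ∈ Icc 1 n, (1/2:ℝ)^i = 1 - (1/2)^n := by
  induction n with
  | zero => simp
  | succ k ih => rw [Finset.sum_Icc_succ_top (by omega), ih]; ring

private lemma sum_lin' (n : ℕ) : ∑ i ∈ Icc 1 n, (i:ℝ) * (1/2:ℝ)^i = 2 - ((n:ℝ)+2) * (1/2)^n := by
  induction n with
  | zero => norm_num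
  | succ k ih => rw [Finset.sum_Icc_succ_top (by omega), ih]; push_cast; ring

private lemma sum_sq' (n : ℕ) : ∑ i ∈ Icc 1 n, (i:ℝ)^2 * (1/2:ℝ)^i = 6 - ((n:ℝ)^2 + 4*n + 6) * (1/2)^n := by
  induction n with
  | zero => norm_num
  | succ k ih => rw [Finset.sum_Icc_succ_top (by omega), ih]; push_cast; ring

private lemma nat_sq_le' (n : ℕ) : (n+1)^2 ≤ 8 * 2^n := by
  induction n with
  | zero => norm_num
  | succ k ih =>
    have h2 : k < 2^k := Nat.lt_two_pow_self
    have : 2^(k+1) = 2 * 2^k := by ring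
    nlinarith

private lemma real_sq_le' (n : ℕ) : ((n:ℝ)+1)^2 * (1/2:ℝ)^n ≤ 8 := by
  have h := nat_sq_le' n
  have h2 : (0:ℝ) < 2^n := by positivity
  have hc : ((n:ℝ)+1)^2 ≤ 8 * 2^n := by exact_mod_cast h
  have heq : ((n:ℝ)+1)^2 * (1/2:ℝ)^n = ((n:ℝ)+1)^2 / 2^n := by
    rw [div_pow, one_pow]; ring
  rw [heq, div_le_iff₀ h2]
  linarith

private lemma key_sum' (n : ℕ) (η : ℝ) (hη0 : 0 ≤ η)
    (w : ℕ → ℝ) (hw : ∀ i ∈ Icc 1 n, w i = (1/2:ℝ)^i) (hwm : w (n+1) = (1/2:ℝ)^n) :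
    ∑ i ∈ Icc 1 n, w i • Real.exp (-η * (i:ℝ)) + w (n+1) • Real.exp (-η * ((n+1:ℕ):ℝ))
      ≤ 1 + (1/2:ℝ)^n * η - 2 * η + 14 * η ^ 2 := by
  have hbound : ∀ i : ℕ, Real.exp (-η * (i:ℝ)) ≤ 1 - η*i + (η*i)^2 := by
    intro i
    have := exp_neg_le' (η * i) (by positivity)
    rw [neg_mul]
    exact this
  have e1 : ∑ i ∈ Icc 1 n, w i • Real.exp (-η*(i:ℝ))
      ≤ ∑ i ∈ Icc 1 n, (1/2:ℝ)^i * (1 - η*i + (η*i)^2) := by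
    apply Finset.sum_le_sum
    intro i hi
    rw [hw i hi, smul_eq_mul]
    exact mul_le_mul_of_nonneg_left (hbound i) (by positivity)
  have e2 : w (n+1) • Real.exp (-η*((n+1:ℕ):ℝ))
      ≤ (1/2:ℝ)^n * (1 - η*((n+1:ℕ):ℝ) + (η*((n+1:ℕ):ℝ))^2) := by
    rw [hwm, smul_eq_mul]
    exact mul_le_mul_of_nonneg_left (hbound (n+1)) (by positivity)
  have e3 : ∑ i ∈ Icc 1 n, (1/2:ℝ)^i * (1 - η*i + (η*i)^2)
      = (∑ i ∈ Icc 1 n, (1/2:ℝ)^i) - η * (∑ i ∈ Icc 1 n, (i:ℝ)*(1/2)^i)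
        + η^2 * (∑ i ∈ Icc 1 n, (i:ℝ)^2*(1/2)^i) := by
    rw [Finset.mul_sum, Finset.mul_sum, ← Finset.sum_sub_distrib, ← Finset.sum_add_distrib]
    apply Finset.sum_congr rfl
    intro i _
    ring
  rw [e3, sum_geom', sum_lin', sum_sq'] at e1
  have hq0 : (0:ℝ) ≤ (1/2:ℝ)^n := by positivity
  have h8 : η^2 * (((n:ℝ)+1)^2 * (1/2:ℝ)^n) ≤ η^2 * 8 :=
    mul_le_mul_of_nonneg_left (real_sq_le' n) (sq_nonneg η)
  have h6 : (0:ℝ) ≤ η^2 * (((n:ℝ)^2 + 4*n + 6) * (1/2:ℝ)^n) := by positivity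
  have hcast : ((n+1:ℕ):ℝ) = (n:ℝ) + 1 := by push_cast; ring
  rw [hcast] at e2 ⊢
  nlinarith [e1, e2]

/-- Estimate for the mgf of the negated conditional fitness gain of the (1+1) EA
on LeadingOnes: `E[e^{-ηX}] ≤ 1 + (1/2)^{m-1}·η - 2η + C·η²` for an absolute
constant `C`, uniformly in `m` and `0 ≤ η ≤ 1`. -/
theorem mgf_neg_free_rider_gain_estimate :
    ∃ C : ℝ, ∀ (m : ℕ), 1 ≤ m → ∀ (η : ℝ), 0 ≤ η → η ≤ 1 →
      ∀ (Ω : Type) (m0 : MeasurableSpace Ω) (μ : Measure Ω),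
        IsProbabilityMeasure μ →
        ∀ (X : Ω → ℕ), Measurable X →
        (∀ ω, 1 ≤ X ω ∧ X ω ≤ m) →
        (∀ i : ℕ, 1 ≤ i → i < m →
          μ {ω | X ω = i} = ENNReal.ofReal ((1 / 2 : ℝ) ^ i)) →
        μ {ω | X ω = m} = ENNReal.ofReal ((1 / 2 : ℝ) ^ (m - 1)) →
        ∫ ω, Real.exp (-η * (X ω : ℝ)) ∂μ ≤
          1 + (1 / 2 : ℝ) ^ (m - 1) * η - 2 * η + C * η ^ 2 := by
  refine ⟨14, ?_⟩
  intro m hm η hη0 hη1 Ω m0 μ hμ X hX hXr hpi hpm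
  obtain ⟨n, rfl⟩ : ∃ n, m = n + 1 := ⟨m - 1, by omega⟩
  simp only [Nat.add_sub_cancel] at hpm ⊢
  have hfm : Measurable fun i : ℕ => Real.exp (-η * (i:ℝ)) := measurable_from_nat
  have hInt : Integrable (fun ω => Real.exp (-η * (X ω : ℝ))) μ := by
    refine (integrable_const (1:ℝ)).mono' (hfm.comp hX).aestronglyMeasurable ?_
    filter_upwards with ω
    rw [Real.norm_eq_abs, abs_of_pos (Real.exp_pos _)]
    apply Real.exp_le_one_iff.mpr
    have : (0:ℝ) ≤ (X ω : ℝ) := Nat.cast_nonneg _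
    nlinarith
  have h1 : ∫ ω, Real.exp (-η * (X ω : ℝ)) ∂μ
      = ∫ i, Real.exp (-η * (i:ℝ)) ∂(μ.map X) := by
    rw [integral_map hX.aemeasurable hfm.aestronglyMeasurable]
  have hInt2 : Integrable (fun i : ℕ => Real.exp (-η * (i:ℝ))) (μ.map X) := by
    rwa [integrable_map_measure hfm.aestronglyMeasurable hX.aemeasurable]
  have h2 := integral_countable' hInt2
  have hmapv : ∀ i : ℕ, (μ.map X) {i} = μ {ω | X ω = i} := by
    intro i
    rw [Measure.map_apply hX (measurableSet_singleton i)]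
    rfl
  have hzero : ∀ i ∉ Icc 1 (n+1), ((μ.map X) {i}).toReal • Real.exp (-η * (i:ℝ)) = 0 := by
    intro i hi
    have he : {ω | X ω = i} = ∅ := by
      ext ω
      simp only [Set.mem_setOf_eq, Set.mem_empty_iff_false, iff_false]
      intro h
      have := hXr ω
      simp only [Finset.mem_Icc, not_and_or, not_le] at hi
      omega
    rw [hmapv, he]
    simp
  have h3 : ∑' i : ℕ, ((μ.map X) {i}).toReal • Real.exp (-η * (i:ℝ))
      = ∑ i ∈ Icc 1 (n+1), ((μ.map X) {i}).toReal • Real.exp (-η * (i:ℝ)) :=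
    tsum_eq_sum hzero
  rw [h1, h2]; unfold Measure.real; rw [h3, Finset.sum_Icc_succ_top (by omega : 1 ≤ n + 1)]
  have hw : ∀ i ∈ Icc 1 n, ((μ.map X) {i}).toReal = (1/2:ℝ)^i := by
    intro i hi
    simp only [Finset.mem_Icc] at hi
    rw [hmapv, hpi i hi.1 (by omega), ENNReal.toReal_ofReal (by positivity)]
  have hwm : ((μ.map X) {n+1}).toReal = (1/2:ℝ)^n := by
    rw [hmapv, hpm, ENNReal.toReal_ofReal (by positivity)]
  exact key_sum' n η hη0 (fun i => ((μ.map X) {i}).toReal) hw hwm
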